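/- Let θ₀ ∈ ℝⁿ, L₀ : ℝⁿ → ℝ, and let S be a nonzero linear subspace of ℝⁿ. Let (X, μ) be a measure space, J : X → ℝ^{m×n}, and M : X → ℝ^{m×m} with each M(x) symmetric and M(x) ⪯ βI for a constant β > 0; assume x ↦ J(x)ᵀM(x)J(x) and x ↦ J(x)ᵀJ(x) are Bochner integrable, and set H₀ := ∫ J(x)ᵀM(x)J(x) dμ(x) (a symmetric matrix) and G := ∫ J(x)ᵀJ(x) dμ(x). Define the drift radius ε(S) by ε(S)² := sup{ vᵀGv : v ∈ S, ‖v‖₂ = 1 }. Assume (Taylor control at a stationary point) there exist ρ₀ > 0 and C_T ≥ 0 such that |L₀(θ₀ + Δθ) − L₀(θ₀) − ½ ΔθᵀH₀Δθ| ≤ C_T ‖Δθ‖₂³ for all Δθ with ‖Δθ‖₂ ≤ ρ₀. Then for every ρ with 0 < ρ ≤ ρ₀ and every Δθ ∈ S with ‖Δθ‖₂ ≤ ρ, L₀(θ₀ + Δθ) − L₀(θ₀) ≤ (β/2) ε(S)² ρ² + C_T ρ³; in particular the local worst-case forgetting F_max(S, ρ) := sup{ L₀(θ₀ + Δθ) −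 L₀(θ₀) : Δθ ∈ S, ‖Δθ‖₂ ≤ ρ } satisfies F_max(S, ρ) ≤ (β/2) ε(S)² ρ² + C_T ρ³. -/

import Mathlib

open MeasureTheory Matrix
open scoped RealInnerProductSpace

/-- The quadratic form `v ↦ vᵀ A v` of a matrix `A`, on Euclidean space. -/
noncomputable def quadForm {n : ℕ} (A : Matrix (Fin n) (Fin n) ℝ)
    (v : EuclideanSpace ℝ (Fin n)) : ℝ :=
  ⟪v, Matrix.toEuclideanLin A v⟫

lemma quadForm_eq {n : ℕ} (A : Matrix (Fin n) (Fin n) ℝ) (v : EuclideanSpace ℝ (Fin n)) :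
    quadForm A v = (fun i => v i) ⬝ᵥ A.mulVec (fun i => v i) := by
  simp [quadForm, Matrix.toEuclideanLin_apply, PiLp.inner_apply, dotProduct, mul_comm]

lemma quadForm_smul {n : ℕ} (A : Matrix (Fin n) (Fin n) ℝ) (c : ℝ)
    (v : EuclideanSpace ℝ (Fin n)) : quadForm A (c • v) = c ^ 2 * quadForm A v := by
  simp only [quadForm, _root_.map_smul, real_inner_smul_left, real_inner_smul_right]
  ring

lemma dot_quad_integrable {X : Type*} [MeasurableSpace X] (μ : Measure X) {n : ℕ}
    (A : X → Matrix (Fin n) (Fin n) ℝ) (hint : ∀ i j, Integrable (fun x => A x i j) μ)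
    (v : Fin n → ℝ) : Integrable (fun x => v ⬝ᵥ (A x).mulVec v) μ := by
  simp only [dotProduct, mulVec, Finset.mul_sum]
  apply integrable_finset_sum
  intro i _
  apply integrable_finset_sum
  intro j _
  exact ((hint i j).mul_const _).const_mul _

lemma dot_quad_integral {X : Type*} [MeasurableSpace X] (μ : Measure X) {n : ℕ}
    (A : X → Matrix (Fin n) (Fin n) ℝ) (B : Matrix (Fin n) (Fin n) ℝ)
    (hB : ∀ i j, B i j = ∫ x, A x i j ∂μ)
    (hint : ∀ i j, Integrable (fun x => A x i j) μ) (v : Fin n → ℝ) :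
    v ⬝ᵥ B.mulVec v = ∫ x, v ⬝ᵥ (A x).mulVec v ∂μ := by
  simp only [dotProduct, mulVec, Finset.mul_sum]
  rw [integral_finset_sum _ (fun i _ => by
    apply integrable_finset_sum; intro j _; exact ((hint i j).mul_const _).const_mul _)]
  refine Finset.sum_congr rfl fun i _ => ?_
  rw [integral_finset_sum _ (fun j _ => ((hint i j).mul_const _).const_mul _)]
  refine Finset.sum_congr rfl fun j _ => ?_
  rw [hB, integral_const_mul, integral_mul_const]

/-- **Worst-case forgetting is controlled by functional drift.**
Let `θ₀ ∈ ℝⁿ`, `L₀ : ℝⁿ → ℝ`, and `S` a nonzero subspace of `ℝⁿ`.  Let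
`J : X → ℝ^{m×n}` and `M : X → ℝ^{m×m}` with each `M(x)` symmetric and
`M(x) ⪯ βI` (`β > 0`), and set (entrywise Bochner integrals)
`H₀ = ∫ J(x)ᵀ M(x) J(x) dμ` (a symmetric matrix) and `G = ∫ J(x)ᵀ J(x) dμ`;
the drift radius obeys `ε(S)² = sup { vᵀGv : v ∈ S, ‖v‖₂ = 1 }`.
Under Taylor control at a stationary point, for every `0 < ρ ≤ ρ₀` and every
`Δθ ∈ S` with `‖Δθ‖₂ ≤ ρ`, `L₀(θ₀+Δθ) − L₀(θ₀) ≤ (β/2) ε(S)² ρ² + C_T ρ³`;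
in particular the local worst-case forgetting `F_max(S, ρ)` obeys the same
bound. -/
theorem stmt8
    (n : ℕ)
    (θ₀ : EuclideanSpace ℝ (Fin n))
    (L₀ : EuclideanSpace ℝ (Fin n) → ℝ)
    (S : Submodule ℝ (EuclideanSpace ℝ (Fin n))) (hS : S ≠ ⊥)
    (X : Type*) [MeasurableSpace X] (μ : Measure X)
    (m : ℕ)
    (J : X → Matrix (Fin m) (Fin n) ℝ)
    (M : X → Matrix (Fin m) (Fin m) ℝ)
    (β : ℝ) (hβ : 0 < β)
    (hMsymm : ∀ x, (M x).IsSymm)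
    (hMle : ∀ x, (β • (1 : Matrix (Fin m) (Fin m) ℝ) - M x).PosSemidef)
    (hintH : ∀ i j, Integrable (fun x => ((J x)ᵀ * M x * J x) i j) μ)
    (hintG : ∀ i j, Integrable (fun x => ((J x)ᵀ * J x) i j) μ)
    (H₀ : Matrix (Fin n) (Fin n) ℝ) (hH₀symm : H₀.IsSymm)
    (hH₀ : ∀ i j, H₀ i j = ∫ x, ((J x)ᵀ * M x * J x) i j ∂μ)
    (G : Matrix (Fin n) (Fin n) ℝ)
    (hG : ∀ i j, G i j = ∫ x, ((J x)ᵀ * J x) i j ∂μ)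
    (epsSq : ℝ)
    (heps : epsSq = sSup {r : ℝ | ∃ v : EuclideanSpace ℝ (Fin n),
      v ∈ S ∧ ‖v‖ = 1 ∧ r = quadForm G v})
    (ρ₀ C_T : ℝ) (hρ₀ : 0 < ρ₀) (hCT : 0 ≤ C_T)
    (hTaylor : ∀ Δθ : EuclideanSpace ℝ (Fin n), ‖Δθ‖ ≤ ρ₀ →
      |L₀ (θ₀ + Δθ) - L₀ θ₀ - (1 / 2) * quadForm H₀ Δθ| ≤ C_T * ‖Δθ‖ ^ 3) :
    ∀ ρ : ℝ, 0 < ρ → ρ ≤ ρ₀ →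
      (∀ Δθ ∈ S, ‖Δθ‖ ≤ ρ →
          L₀ (θ₀ + Δθ) - L₀ θ₀ ≤ (β / 2) * epsSq * ρ ^ 2 + C_T * ρ ^ 3) ∧
        sSup {r : ℝ | ∃ Δθ : EuclideanSpace ℝ (Fin n),
            Δθ ∈ S ∧ ‖Δθ‖ ≤ ρ ∧ r = L₀ (θ₀ + Δθ) - L₀ θ₀} ≤
          (β / 2) * epsSq * ρ ^ 2 + C_T * ρ ^ 3 := by
  -- pointwise: quadform of JᵀMJ ≤ β * quadform of JᵀJ, and the latter is ≥ 0
  have key : ∀ (x : X) (v : Fin n → ℝ),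
      v ⬝ᵥ ((J x)ᵀ * M x * J x).mulVec v ≤ β * (v ⬝ᵥ ((J x)ᵀ * J x).mulVec v) ∧
      0 ≤ v ⬝ᵥ ((J x)ᵀ * J x).mulVec v := by
    intro x v
    set w : Fin m → ℝ := (J x).mulVec v with hw
    have h1 : v ⬝ᵥ ((J x)ᵀ * M x * J x).mulVec v = w ⬝ᵥ (M x).mulVec w := by
      rw [← mulVec_mulVec, ← mulVec_mulVec, dotProduct_mulVec, vecMul_transpose]
    have h2 : v ⬝ᵥ ((J x)ᵀ * J x).mulVec v = w ⬝ᵥ w := by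
      rw [← mulVec_mulVec, dotProduct_mulVec, vecMul_transpose]
    have hww : (0:ℝ) ≤ w ⬝ᵥ w := by
      apply Finset.sum_nonneg; intro i _; exact mul_self_nonneg _
    have hpsd := (hMle x).dotProduct_mulVec_nonneg w
    rw [star_trivial, sub_mulVec, dotProduct_sub, smul_mulVec, one_mulVec,
      dotProduct_smul, smul_eq_mul, sub_nonneg] at hpsd
    constructor
    · rw [h1, h2]; exact hpsd
    · rw [h2]; exact hww
  -- quadForm H₀ v ≤ β * quadForm G v, and 0 ≤ quadForm G v
  have hHG : ∀ v : EuclideanSpace ℝ (Fin n),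
      quadForm H₀ v ≤ β * quadForm G v ∧ 0 ≤ quadForm G v := by
    intro v
    have e1 := dot_quad_integral μ _ H₀ hH₀ hintH (fun i => v i)
    have e2 := dot_quad_integral μ _ G hG hintG (fun i => v i)
    rw [quadForm_eq, e1, quadForm_eq, e2]
    constructor
    · rw [← integral_const_mul]
      exact integral_mono (dot_quad_integrable μ _ hintH _)
        ((dot_quad_integrable μ _ hintG _).const_mul β)
        (fun x => (key x _).1)
    · exact integral_nonneg fun x => (key x _).2
  -- the drift set
  set T : Set ℝ := {r : ℝ | ∃ v : EuclideanSpace ℝ (Fin n),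
      v ∈ S ∧ ‖v‖ = 1 ∧ r = quadForm G v} with hT
  obtain ⟨v₀, hv₀S, hv₀⟩ : ∃ v ∈ S, v ≠ 0 := by
    by_contra h
    push_neg at h
    exact hS (Submodule.eq_bot_iff S |>.2 h)
  have hu₀ : (‖v₀‖⁻¹ • v₀) ∈ S ∧ ‖(‖v₀‖⁻¹ • v₀)‖ = 1 := by
    constructor
    · exact S.smul_mem _ hv₀S
    · rw [norm_smul, norm_inv, norm_norm, inv_mul_cancel₀ (norm_ne_zero_iff.2 hv₀)]
  have hTne : T.Nonempty := ⟨_, _, hu₀.1, hu₀.2, rfl⟩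
  have hTbdd : BddAbove T := by
    refine ⟨‖LinearMap.toContinuousLinearMap (Matrix.toEuclideanLin G)‖, ?_⟩
    rintro r ⟨v, -, hv1, rfl⟩
    calc quadForm G v ≤ ‖v‖ * ‖Matrix.toEuclideanLin G v‖ := real_inner_le_norm _ _
      _ = ‖LinearMap.toContinuousLinearMap (Matrix.toEuclideanLin G) v‖ := by
          rw [hv1, one_mul]; rfl
      _ ≤ ‖LinearMap.toContinuousLinearMap (Matrix.toEuclideanLin G)‖ * ‖v‖ :=
          ContinuousLinearMap.le_opNorm _ _
      _ = _ := by rw [hv1, mul_one]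
  have hepsnn : 0 ≤ epsSq := by
    rw [heps]
    exact le_trans (hHG _).2 (le_csSup hTbdd ⟨_, hu₀.1, hu₀.2, rfl⟩)
  -- quadForm G v ≤ epsSq * ‖v‖² for v ∈ S
  have hGbound : ∀ v ∈ S, quadForm G v ≤ epsSq * ‖v‖ ^ 2 := by
    intro v hvS
    rcases eq_or_ne v 0 with rfl | hv
    · simp [quadForm]
    · have hn : ‖v‖ ≠ 0 := norm_ne_zero_iff.2 hv
      have hu : quadForm G (‖v‖⁻¹ • v) ≤ epsSq := by
        rw [heps]
        refine le_csSup hTbdd ⟨_, S.smul_mem _ hvS, ?_, rfl⟩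
        rw [norm_smul, norm_inv, norm_norm, inv_mul_cancel₀ hn]
      rw [quadForm_smul] at hu
      have : quadForm G v = ‖v‖ ^ 2 * ((‖v‖⁻¹) ^ 2 * quadForm G v) := by
        field_simp
      rw [this, mul_comm epsSq]
      exact mul_le_mul_of_nonneg_left hu (by positivity)
  intro ρ hρ hρρ₀
  have main : ∀ Δθ ∈ S, ‖Δθ‖ ≤ ρ →
      L₀ (θ₀ + Δθ) - L₀ θ₀ ≤ (β / 2) * epsSq * ρ ^ 2 + C_T * ρ ^ 3 := by
    intro Δθ hΔS hΔρ
    have hΔρ₀ : ‖Δθ‖ ≤ ρ₀ := hΔρ.trans hρρ₀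
    have ht := hTaylor Δθ hΔρ₀
    have h1 : L₀ (θ₀ + Δθ) - L₀ θ₀ ≤ (1 / 2) * quadForm H₀ Δθ + C_T * ‖Δθ‖ ^ 3 := by
      have := (abs_le.1 ht).2
      linarith
    have h2 : quadForm H₀ Δθ ≤ β * (epsSq * ‖Δθ‖ ^ 2) :=
      (hHG Δθ).1.trans (mul_le_mul_of_nonneg_left (hGbound Δθ hΔS) hβ.le)
    have h3 : ‖Δθ‖ ^ 2 ≤ ρ ^ 2 := by
      apply pow_le_pow_left₀ (norm_nonneg _) hΔρ
    have h4 : ‖Δθ‖ ^ 3 ≤ ρ ^ 3 := by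
      apply pow_le_pow_left₀ (norm_nonneg _) hΔρ
    calc L₀ (θ₀ + Δθ) - L₀ θ₀ ≤ (1 / 2) * quadForm H₀ Δθ + C_T * ‖Δθ‖ ^ 3 := h1
      _ ≤ (1 / 2) * (β * (epsSq * ‖Δθ‖ ^ 2)) + C_T * ρ ^ 3 := by
          have := mul_le_mul_of_nonneg_left h4 hCT
          linarith
      _ ≤ (β / 2) * epsSq * ρ ^ 2 + C_T * ρ ^ 3 := by
          have h5 : epsSq * ‖Δθ‖ ^ 2 ≤ epsSq * ρ ^ 2 :=
            mul_le_mul_of_nonneg_left h3 hepsnn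
          nlinarith
  refine ⟨main, csSup_le ⟨0, 0, S.zero_mem, by simp [hρ.le], by simp⟩ ?_⟩
  rintro r ⟨Δθ, hΔS, hΔρ, rfl⟩
  exact main Δθ hΔS hΔρ
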